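/- There exists a constant C₂ > 1 with the following property. For every commutative unital normed ℝ-algebra A with submultiplicative norm, every ℝ-linear derivation D : A → A, every integer N ≥ 3, every real L ≥ 1, and all elements u₁, u₂ ∈ A satisfying ‖Dⁿ uᵢ‖ ≤ L^{n−2}·(n−3)! for all integers 3 ≤ n ≤ N and i ∈ {1,2}, one has ‖Dⁿ(u₁u₂)‖ ≤ C₂·(1 + Σ_{i=1}^{2} Σ_{l=0}^{2} ‖D^l uᵢ‖)²·L^{n−2}·(n−3)! for all integers 3 ≤ n ≤ N. -/

import Mathlib

open Finset

private lemma fact_expand3 (a : ℕ) : (a+3).factorial = (a+3)*(a+2)*(a+1)*a.factorial := by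
  rw [Nat.factorial_succ, Nat.factorial_succ, Nat.factorial_succ]; ring

private lemma lemA (a b : ℕ) (hab : a ≤ b) :
    (a+b+6).choose (a+3) * a.factorial * b.factorial * ((a+3)*(a+2)*(a+1))
      ≤ 36 * (a+b+3).factorial := by
  have hQ : 0 < (b+3)*(b+2)*(b+1) := by positivity
  apply Nat.le_of_mul_le_mul_right _ hQ
  have hle : a + 3 ≤ a + b + 6 := by omega
  have hsub : a + b + 6 - (a + 3) = b + 3 := by omega
  have key : (a+b+6).choose (a+3) * a.factorial * b.factorial * ((a+3)*(a+2)*(a+1))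
      * ((b+3)*(b+2)*(b+1)) = (a+b+6).factorial := by
    have := Nat.choose_mul_factorial_mul_factorial hle
    rw [hsub] at this
    rw [← this, fact_expand3 a, fact_expand3 b]; ring
  rw [key]
  have hfe : (a+b+6).factorial = (a+b+6)*(a+b+5)*(a+b+4)*(a+b+3).factorial := by
    rw [show a+b+6 = (a+b+3)+3 by ring, fact_expand3]
  rw [hfe]
  have hcoef : (a+b+6)*(a+b+5)*(a+b+4) ≤ 36 * ((b+3)*(b+2)*(b+1)) := by
    calc (a+b+6)*(a+b+5)*(a+b+4) ≤ (2*b+6)*(2*b+5)*(2*b+4) := by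
          apply Nat.mul_le_mul (Nat.mul_le_mul (by omega) (by omega)) (by omega)
      _ ≤ 36 * ((b+3)*(b+2)*(b+1)) := by nlinarith [b.zero_le, sq_nonneg b]
  calc (a+b+6)*(a+b+5)*(a+b+4)*(a+b+3).factorial
      ≤ 36 * ((b+3)*(b+2)*(b+1)) * (a+b+3).factorial := Nat.mul_le_mul_right _ hcoef
    _ = 36 * (a+b+3).factorial * ((b+3)*(b+2)*(b+1)) := by ring

private lemma lemB1 (n k : ℕ) (hn : 3 ≤ n) (hk2 : k ≤ 2) :
    n.choose k * ((n-k)-3).factorial ≤ 6 * (n-3).factorial := by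
  interval_cases k
  · simpa using Nat.le_mul_of_pos_left _ (by norm_num)
  · rw [Nat.choose_one_right]
    rcases Nat.lt_or_ge n 4 with h4 | h4
    · have : n = 3 := by omega
      subst this; norm_num
    · obtain ⟨m, rfl⟩ : ∃ m, n = m + 4 := ⟨n - 4, by omega⟩
      have e1 : (m + 4 - 1) - 3 = m := by omega
      have e2 : (m + 4) - 3 = m + 1 := by omega
      rw [e1, e2, Nat.factorial_succ]
      calc (m+4) * m.factorial ≤ 6 * ((m+1) * m.factorial) := by
            rw [← mul_assoc]; exact Nat.mul_le_mul_right _ (by omega)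
        _ = 6 * ((m+1) * m.factorial) := rfl
  · rcases Nat.lt_or_ge n 5 with h5 | h5
    · interval_cases n <;> simp [Nat.choose]
    · obtain ⟨m, rfl⟩ : ∃ m, n = m + 5 := ⟨n - 5, by omega⟩
      have e1 : (m + 5 - 2) - 3 = m := by omega
      have e2 : (m + 5) - 3 = m + 2 := by omega
      rw [e1, e2]
      have h2C : 2 * ((m+5).choose 2) = (m+5) * (m+4) := by
        have h := Nat.choose_mul_factorial_mul_factorial (show 2 ≤ m+5 by omega)
        have e3 : m + 5 - 2 = m + 3 := by omega
        rw [e3] at h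
        have h5f : (m+5).factorial = (m+5) * ((m+4) * (m+3).factorial) := by
          rw [Nat.factorial_succ, Nat.factorial_succ]
        apply Nat.eq_of_mul_eq_mul_right (Nat.factorial_pos (m+3))
        calc 2 * ((m+5).choose 2) * (m+3).factorial
            = (m+5).choose 2 * Nat.factorial 2 * (m+3).factorial := by
              have h2 : Nat.factorial 2 = 2 := rfl
              rw [h2]; ring
          _ = (m+5).factorial := h
          _ = (m+5) * (m+4) * (m+3).factorial := by rw [h5f]; ring
      refine Nat.le_of_mul_le_mul_left ?_ (show 0 < 2 by norm_num)
      calc 2 * ((m+5).choose 2 * m.factorial)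
          = (2 * (m+5).choose 2) * m.factorial := by ring
        _ = ((m+5) * (m+4)) * m.factorial := by rw [h2C]
        _ ≤ (12 * ((m+2) * (m+1))) * m.factorial := by
              apply Nat.mul_le_mul_right; nlinarith [m.zero_le]
        _ = 2 * (6 * ((m+2).factorial)) := by
              rw [Nat.factorial_succ, Nat.factorial_succ]; ring

private lemma lemB (n k : ℕ) (hn : 3 ≤ n) (hkn : k ≤ n) (h : k ≤ 2 ∨ n ≤ k + 2) :
    n.choose k * (k-3).factorial * ((n-k)-3).factorial ≤ 6 * (n-3).factorial := by
  rcases h with h | h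
  · have : (k-3).factorial = 1 := by
      have : k - 3 = 0 := by omega
      rw [this]; rfl
    rw [this, mul_one]
    exact lemB1 n k hn h
  · have hsym : n.choose k = n.choose (n - k) := (Nat.choose_symm hkn).symm
    have h2 : n - k ≤ 2 := by omega
    have : ((n-k)-3).factorial = 1 := by
      have : (n-k) - 3 = 0 := by omega
      rw [this]; rfl
    rw [this, mul_one, hsym]
    have e : k - 3 = (n - (n-k)) - 3 := by omega
    rw [e]
    exact lemB1 n (n-k) hn h2

private noncomputable def inv3 (k : ℕ) : ℝ := 1 / ((k:ℝ) * ((k:ℝ) - 1) * ((k:ℝ) - 2))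

private lemma inv3_cast (m : ℕ) : inv3 (m+3) = 1/(((m:ℝ)+3)*((m:ℝ)+2)*((m:ℝ)+1)) := by
  unfold inv3; push_cast; ring_nf

private lemma inv3_nonneg (k : ℕ) : 0 ≤ inv3 k := by
  match k with
  | 0 => simp [inv3]
  | 1 => norm_num [inv3]
  | 2 => norm_num [inv3]
  | (m+3) => rw [inv3_cast]; positivity

private lemma tele_eq (n : ℕ) :
    ∑ k ∈ range (n + 3), inv3 k = 1/4 - 1/(2 * ((n:ℝ)+2) * ((n:ℝ)+1)) := by
  induction n with
  | zero => norm_num [Finset.sum_range_succ, inv3]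
  | succ n ih =>
    rw [show n + 1 + 3 = (n + 3) + 1 by omega, Finset.sum_range_succ, ih, inv3_cast]
    have h1 : ((n:ℝ)+1) ≠ 0 := by positivity
    have h2 : ((n:ℝ)+2) ≠ 0 := by positivity
    have h3 : ((n:ℝ)+3) ≠ 0 := by positivity
    push_cast
    field_simp
    ring

private lemma tele_le (m : ℕ) : ∑ k ∈ range m, inv3 k ≤ 1/4 := by
  rcases Nat.lt_or_ge m 3 with h | h
  · interval_cases m <;> norm_num [Finset.sum_range_succ, inv3]
  · obtain ⟨n, rfl⟩ : ∃ n, m = n + 3 := ⟨m - 3, by omega⟩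
    rw [tele_eq]
    have : 0 < 1/(2 * ((n:ℝ)+2) * ((n:ℝ)+1)) := by positivity
    linarith

private lemma cast_div_step (t P F : ℝ) (hP : 0 < P) (h : t * P ≤ 36 * F) :
    t ≤ 36 * F * (1/P) := by
  rw [mul_one_div, le_div_iff₀ hP]; exact h

private lemma midterm (n k : ℕ) (h3k : 3 ≤ k) (h3m : k + 3 ≤ n) :
    (n.choose k : ℝ) * ((k-3).factorial : ℝ) * (((n-k)-3).factorial : ℝ)
      ≤ 36 * ((n-3).factorial : ℝ) * (inv3 k + inv3 (n-k)) := by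
  obtain ⟨a, rfl⟩ : ∃ a, k = a + 3 := ⟨k - 3, by omega⟩
  obtain ⟨b, rfl⟩ : ∃ b, n = a + b + 6 := ⟨n - a - 6, by omega⟩
  have ek : a + 3 - 3 = a := by omega
  have em : a + b + 6 - (a + 3) = b + 3 := by omega
  have em3 : b + 3 - 3 = b := by omega
  have en3 : a + b + 6 - 3 = a + b + 3 := by omega
  rw [ek, em, em3, en3]
  rcases le_total a b with hab | hab
  · have h := lemA a b hab
    have hcast : ((a+b+6).choose (a+3) : ℝ) * (a.factorial : ℝ) * (b.factorial : ℝ)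
        * (((a:ℝ)+3)*((a:ℝ)+2)*((a:ℝ)+1)) ≤ 36 * ((a+b+3).factorial : ℝ) := by
      exact_mod_cast h
    have hP : (0:ℝ) < ((a:ℝ)+3)*((a:ℝ)+2)*((a:ℝ)+1) := by positivity
    have h1 := cast_div_step _ _ _ hP hcast
    rw [← inv3_cast] at h1
    have h2 : 0 ≤ 36 * ((a+b+3).factorial : ℝ) * inv3 (b+3) := by
      have := inv3_nonneg (b+3); positivity
    calc ((a+b+6).choose (a+3) : ℝ) * (a.factorial : ℝ) * (b.factorial : ℝ)
        ≤ 36 * ((a+b+3).factorial : ℝ) * inv3 (a+3) := h1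
      _ ≤ 36 * ((a+b+3).factorial : ℝ) * (inv3 (a+3) + inv3 (b+3)) := by
          rw [mul_add]; linarith
  · have h := lemA b a hab
    have hsymm : (a+b+6).choose (a+3) = (a+b+6).choose (b+3) := by
      rw [← Nat.choose_symm (show a+3 ≤ a+b+6 by omega), em]
    rw [show b+a+6 = a+b+6 by ring, show b+a+3 = a+b+3 by ring] at h
    have hcast : ((a+b+6).choose (a+3) : ℝ) * (a.factorial : ℝ) * (b.factorial : ℝ)
        * (((b:ℝ)+3)*((b:ℝ)+2)*((b:ℝ)+1)) ≤ 36 * ((a+b+3).factorial : ℝ) := by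
      rw [hsymm]
      have : (a+b+6).choose (b+3) * b.factorial * a.factorial * ((b+3)*(b+2)*(b+1))
          = (a+b+6).choose (b+3) * a.factorial * b.factorial * ((b+3)*(b+2)*(b+1)) := by ring
      rw [this] at h
      exact_mod_cast h
    have hP : (0:ℝ) < ((b:ℝ)+3)*((b:ℝ)+2)*((b:ℝ)+1) := by positivity
    have h1 := cast_div_step _ _ _ hP hcast
    rw [← inv3_cast] at h1
    calc ((a+b+6).choose (a+3) : ℝ) * (a.factorial : ℝ) * (b.factorial : ℝ)
        ≤ 36 * ((a+b+3).factorial : ℝ) * inv3 (b+3) := h1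
      _ ≤ 36 * ((a+b+3).factorial : ℝ) * (inv3 (a+3) + inv3 (b+3)) := by
          have := inv3_nonneg (a+3)
          have hF : (0:ℝ) ≤ ((a+b+3).factorial : ℝ) := by positivity
          rw [mul_add]; nlinarith

private lemma comb (n : ℕ) (hn : 3 ≤ n) :
    ∑ k ∈ range (n+1), ((n.choose k : ℝ) * ((k-3).factorial : ℝ) * (((n-k)-3).factorial : ℝ))
      ≤ 54 * ((n-3).factorial : ℝ) := by
  classical
  set F : ℝ := ((n-3).factorial : ℝ) with hF
  have hF0 : (0:ℝ) ≤ F := by positivity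
  rw [← Finset.sum_filter_add_sum_filter_not (range (n+1)) (fun k => 3 ≤ k ∧ k + 3 ≤ n)]
  have hmid : ∑ k ∈ (range (n+1)).filter (fun k => 3 ≤ k ∧ k + 3 ≤ n),
      ((n.choose k : ℝ) * ((k-3).factorial : ℝ) * (((n-k)-3).factorial : ℝ)) ≤ 18 * F := by
    have step1 : ∑ k ∈ (range (n+1)).filter (fun k => 3 ≤ k ∧ k + 3 ≤ n),
        ((n.choose k : ℝ) * ((k-3).factorial : ℝ) * (((n-k)-3).factorial : ℝ))
        ≤ ∑ k ∈ (range (n+1)).filter (fun k => 3 ≤ k ∧ k + 3 ≤ n),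
          (36 * F * (inv3 k + inv3 (n-k))) := by
      apply Finset.sum_le_sum
      intro k hk
      rw [Finset.mem_filter] at hk
      exact midterm n k hk.2.1 hk.2.2
    refine step1.trans ?_
    have e : ∑ k ∈ (range (n+1)).filter (fun k => 3 ≤ k ∧ k + 3 ≤ n),
        (36 * F * (inv3 k + inv3 (n-k)))
        = 36 * F * ((∑ k ∈ (range (n+1)).filter (fun k => 3 ≤ k ∧ k + 3 ≤ n), inv3 k)
          + ∑ k ∈ (range (n+1)).filter (fun k => 3 ≤ k ∧ k + 3 ≤ n), inv3 (n-k)) := by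
      rw [← Finset.sum_add_distrib, ← Finset.mul_sum]
    rw [e]
    have b1 : ∑ k ∈ (range (n+1)).filter (fun k => 3 ≤ k ∧ k + 3 ≤ n), inv3 k ≤ 1/4 := by
      refine le_trans (Finset.sum_le_sum_of_subset_of_nonneg (Finset.filter_subset _ _)
        (fun i _ _ => inv3_nonneg i)) (tele_le (n+1))
    have b2 : ∑ k ∈ (range (n+1)).filter (fun k => 3 ≤ k ∧ k + 3 ≤ n), inv3 (n-k) ≤ 1/4 := by
      have hsub : ∑ k ∈ (range (n+1)).filter (fun k => 3 ≤ k ∧ k + 3 ≤ n), inv3 (n-k)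
          ≤ ∑ k ∈ range (n+1), inv3 (n-k) :=
        Finset.sum_le_sum_of_subset_of_nonneg (Finset.filter_subset _ _)
          (fun i _ _ => inv3_nonneg _)
      have hrefl : ∑ k ∈ range (n+1), inv3 (n-k) = ∑ k ∈ range (n+1), inv3 k := by
        have := Finset.sum_range_reflect inv3 (n+1)
        simpa using this
      calc _ ≤ ∑ k ∈ range (n+1), inv3 (n-k) := hsub
        _ = ∑ k ∈ range (n+1), inv3 k := hrefl
        _ ≤ 1/4 := tele_le (n+1)
    calc 36 * F * ((∑ k ∈ (range (n+1)).filter (fun k => 3 ≤ k ∧ k + 3 ≤ n), inv3 k)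
          + ∑ k ∈ (range (n+1)).filter (fun k => 3 ≤ k ∧ k + 3 ≤ n), inv3 (n-k))
        ≤ 36 * F * (1/4 + 1/4) := by
          apply mul_le_mul_of_nonneg_left (by linarith) (by positivity)
      _ = 18 * F := by ring
  have hbdry : ∑ k ∈ (range (n+1)).filter (fun k => ¬(3 ≤ k ∧ k + 3 ≤ n)),
      ((n.choose k : ℝ) * ((k-3).factorial : ℝ) * (((n-k)-3).factorial : ℝ)) ≤ 36 * F := by
    have hcard : ((range (n+1)).filter (fun k => ¬(3 ≤ k ∧ k + 3 ≤ n))).card ≤ 6 := by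
      have hsub : (range (n+1)).filter (fun k => ¬(3 ≤ k ∧ k + 3 ≤ n))
          ⊆ ({0, 1, 2, n-2, n-1, n} : Finset ℕ) := by
        intro k hk
        simp only [Finset.mem_filter, Finset.mem_range] at hk
        simp only [Finset.mem_insert, Finset.mem_singleton]
        omega
      refine (Finset.card_le_card hsub).trans ?_
      refine le_trans (Finset.card_insert_le _ _) (Nat.succ_le_succ ?_)
      refine le_trans (Finset.card_insert_le _ _) (Nat.succ_le_succ ?_)
      refine le_trans (Finset.card_insert_le _ _) (Nat.succ_le_succ ?_)
      refine le_trans (Finset.card_insert_le _ _) (Nat.succ_le_succ ?_)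
      refine le_trans (Finset.card_insert_le _ _) (Nat.succ_le_succ ?_)
      simp
    have hterm : ∀ k ∈ (range (n+1)).filter (fun k => ¬(3 ≤ k ∧ k + 3 ≤ n)),
        ((n.choose k : ℝ) * ((k-3).factorial : ℝ) * (((n-k)-3).factorial : ℝ)) ≤ 6 * F := by
      intro k hk
      simp only [Finset.mem_filter, Finset.mem_range] at hk
      have := lemB n k hn (by omega) (by omega)
      calc ((n.choose k : ℝ) * ((k-3).factorial : ℝ) * (((n-k)-3).factorial : ℝ))
          = ((n.choose k * (k-3).factorial * ((n-k)-3).factorial : ℕ) : ℝ) := by push_cast; ring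
        _ ≤ ((6 * (n-3).factorial : ℕ) : ℝ) := by exact_mod_cast this
        _ = 6 * F := by push_cast; ring
    calc ∑ k ∈ (range (n+1)).filter (fun k => ¬(3 ≤ k ∧ k + 3 ≤ n)),
        ((n.choose k : ℝ) * ((k-3).factorial : ℝ) * (((n-k)-3).factorial : ℝ))
        ≤ ((range (n+1)).filter (fun k => ¬(3 ≤ k ∧ k + 3 ≤ n))).card • (6 * F) :=
          Finset.sum_le_card_nsmul _ _ _ hterm
      _ = (((range (n+1)).filter (fun k => ¬(3 ≤ k ∧ k + 3 ≤ n))).card : ℝ) * (6 * F) := by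
          rw [nsmul_eq_mul]
      _ ≤ 6 * (6 * F) := by
          apply mul_le_mul_of_nonneg_right _ (by positivity)
          exact_mod_cast hcard
      _ = 36 * F := by ring
  linarith

private lemma leibniz_iter {A : Type} [NormedCommRing A] [NormedAlgebra ℝ A] (D : A →ₗ[ℝ] A)
    (hD : ∀ x y : A, D (x * y) = x * D y + D x * y) (x y : A) (n : ℕ) :
    (⇑D)^[n] (x * y) =
      ∑ k ∈ range n.succ, n.choose k • ((⇑D)^[n - k] x * (⇑D)^[k] y) := by
  induction n with
  | zero => simp [Finset.range]
  | succ n IH =>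
    calc
      (⇑D)^[n + 1] (x * y) =
          D (∑ k ∈ range n.succ, n.choose k • ((⇑D)^[n - k] x * (⇑D)^[k] y)) := by
        rw [Function.iterate_succ_apply', IH]
      _ = (∑ k ∈ range n.succ,
            n.choose k • ((⇑D)^[n - k + 1] x * (⇑D)^[k] y)) +
          ∑ k ∈ range n.succ,
            n.choose k • ((⇑D)^[n - k] x * (⇑D)^[k + 1] y) := by
        rw [map_sum]
        simp_rw [map_nsmul, hD, Function.iterate_succ_apply' (⇑D), smul_add, sum_add_distrib]
        rw [add_comm]
      _ = (∑ k ∈ range n.succ,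
                n.choose k.succ • ((⇑D)^[n - k] x * (⇑D)^[k + 1] y)) +
              1 • ((⇑D)^[n + 1] x * (⇑D)^[0] y) +
            ∑ k ∈ range n.succ, n.choose k • ((⇑D)^[n - k] x * (⇑D)^[k + 1] y) :=
        ?_
      _ = ((∑ k ∈ range n.succ, n.choose k • ((⇑D)^[n - k] x * (⇑D)^[k + 1] y)) +
              ∑ k ∈ range n.succ,
                n.choose k.succ • ((⇑D)^[n - k] x * (⇑D)^[k + 1] y)) +
            1 • ((⇑D)^[n + 1] x * (⇑D)^[0] y) := by
        rw [add_comm, add_assoc]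
      _ = (∑ i ∈ range n.succ,
              (n + 1).choose (i + 1) • ((⇑D)^[n + 1 - (i + 1)] x * (⇑D)^[i + 1] y)) +
            1 • ((⇑D)^[n + 1] x * (⇑D)^[0] y) := by
        simp_rw [Nat.choose_succ_succ, Nat.succ_sub_succ, add_smul, sum_add_distrib]
      _ = ∑ k ∈ range n.succ.succ,
            n.succ.choose k • ((⇑D)^[n.succ - k] x * (⇑D)^[k] y) := by
        rw [sum_range_succ' _ n.succ, Nat.choose_zero_right, tsub_zero]
    congr
    refine (sum_range_succ' _ _).trans (congr_arg₂ (· + ·) ?_ ?_)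
    · rw [sum_range_succ, Nat.choose_succ_self, zero_smul, add_zero]
      refine sum_congr rfl fun k hk => ?_
      rw [mem_range] at hk
      congr
      omega
    · rw [Nat.choose_zero_right, tsub_zero]

private lemma leibniz_norm {A : Type} [NormedCommRing A] [NormedAlgebra ℝ A] (D : A →ₗ[ℝ] A)
    (hD : ∀ x y : A, D (x * y) = x * D y + D x * y) (x y : A) (n : ℕ) :
    ‖(⇑D)^[n] (x * y)‖ ≤
      ∑ k ∈ range (n+1), (n.choose k : ℝ) * ‖(⇑D)^[n - k] x‖ * ‖(⇑D)^[k] y‖ := by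
  rw [leibniz_iter D hD x y n]
  refine (norm_sum_le _ _).trans (Finset.sum_le_sum ?_)
  intro k _
  calc ‖n.choose k • ((⇑D)^[n - k] x * (⇑D)^[k] y)‖
      ≤ (n.choose k : ℝ) * ‖(⇑D)^[n - k] x * (⇑D)^[k] y‖ := by
        rw [← Nat.cast_smul_eq_nsmul ℝ, norm_smul]
        simp
    _ ≤ (n.choose k : ℝ) * (‖(⇑D)^[n - k] x‖ * ‖(⇑D)^[k] y‖) := by
        apply mul_le_mul_of_nonneg_left (norm_mul_le _ _) (by positivity)
    _ = (n.choose k : ℝ) * ‖(⇑D)^[n - k] x‖ * ‖(⇑D)^[k] y‖ := by ring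

private lemma unif {A : Type} [NormedCommRing A] [NormedAlgebra ℝ A] (D : A →ₗ[ℝ] A)
    (u : A) (N : ℕ) (L : ℝ) (hL : 1 ≤ L) (B : ℝ) (hB1 : 1 ≤ B)
    (hsum : ∑ l ∈ Finset.range 3, ‖(⇑D)^[l] u‖ ≤ B)
    (hbound : ∀ m : ℕ, 3 ≤ m → m ≤ N → ‖(⇑D)^[m] u‖ ≤ L ^ (m - 2) * (m - 3).factorial) :
    ∀ k : ℕ, k ≤ N → ‖(⇑D)^[k] u‖ ≤ B * L ^ (k - 2) * ((k - 3).factorial : ℝ) := by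
  intro k hk
  rcases Nat.lt_or_ge k 3 with h3 | h3
  · have e2 : k - 2 = 0 := by omega
    have e3 : k - 3 = 0 := by omega
    rw [e2, e3]
    have h1 : ‖(⇑D)^[k] u‖ ≤ ∑ l ∈ Finset.range 3, ‖(⇑D)^[l] u‖ :=
      Finset.single_le_sum (f := fun l => ‖(⇑D)^[l] u‖) (fun i _ => norm_nonneg _) (Finset.mem_range.mpr h3)
    simp only [pow_zero, Nat.factorial_zero, Nat.cast_one, mul_one]
    linarith
  · have h := hbound k h3 hk
    have hpos : (0:ℝ) ≤ L ^ (k - 2) * ((k - 3).factorial : ℝ) := by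
      have : (0:ℝ) ≤ L := by linarith
      positivity
    calc ‖(⇑D)^[k] u‖ ≤ L ^ (k - 2) * ((k - 3).factorial : ℝ) := h
      _ ≤ B * (L ^ (k - 2) * ((k - 3).factorial : ℝ)) := le_mul_of_one_le_left hpos hB1
      _ = B * L ^ (k - 2) * ((k - 3).factorial : ℝ) := by ring

/-- Lemma 2.2 (iii). There is a universal constant `C₂ > 1` such that
for any commutative unital normed `ℝ`-algebra `A` (with submultiplicative norm), any
`ℝ`-linear derivation `D : A → A`, any `N ≥ 3`, `L ≥ 1`, and `u₁, u₂ ∈ A` with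
`‖Dⁿ uᵢ‖ ≤ L^(n-2) (n-3)!` for `3 ≤ n ≤ N`, one has
`‖Dⁿ(u₁u₂)‖ ≤ C₂ (1 + Σᵢ Σ_{l≤2} ‖D^l uᵢ‖)² L^(n-2) (n-3)!` for `3 ≤ n ≤ N`. -/
theorem derivation_product_estimate_two' :
    ∃ C₂ : ℝ, 1 < C₂ ∧
      ∀ (A : Type) [NormedCommRing A] [NormedAlgebra ℝ A] (D : A →ₗ[ℝ] A),
        (∀ x y : A, D (x * y) = x * D y + D x * y) →
        ∀ (N : ℕ), 3 ≤ N → ∀ (L : ℝ), 1 ≤ L → ∀ u₁ u₂ : A,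
          (∀ n : ℕ, 3 ≤ n → n ≤ N →
            ‖(⇑D)^[n] u₁‖ ≤ L ^ (n - 2) * (n - 3).factorial) →
          (∀ n : ℕ, 3 ≤ n → n ≤ N →
            ‖(⇑D)^[n] u₂‖ ≤ L ^ (n - 2) * (n - 3).factorial) →
          ∀ n : ℕ, 3 ≤ n → n ≤ N →
            ‖(⇑D)^[n] (u₁ * u₂)‖ ≤
              C₂ * (1 + (∑ l ∈ Finset.range 3, ‖(⇑D)^[l] u₁‖ +
                  ∑ l ∈ Finset.range 3, ‖(⇑D)^[l] u₂‖)) ^ 2 *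
                L ^ (n - 2) * (n - 3).factorial := by
  refine ⟨54, by norm_num, ?_⟩
  intro A _ _ D hD N hN L hL u₁ u₂ h₁ h₂ n hn3 hnN
  have hL0 : (0:ℝ) ≤ L := by linarith
  set S₁ : ℝ := ∑ l ∈ Finset.range 3, ‖(⇑D)^[l] u₁‖ with hS₁
  set S₂ : ℝ := ∑ l ∈ Finset.range 3, ‖(⇑D)^[l] u₂‖ with hS₂
  have hS₁0 : 0 ≤ S₁ := Finset.sum_nonneg fun i _ => norm_nonneg _
  have hS₂0 : 0 ≤ S₂ := Finset.sum_nonneg fun i _ => norm_nonneg _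
  set B : ℝ := 1 + (S₁ + S₂) with hB
  have hB1 : 1 ≤ B := by simp only [hB]; linarith
  have hB0 : 0 ≤ B := by linarith
  have hu₁ := unif D u₁ N L hL B hB1 (by rw [hB]; linarith) h₁
  have hu₂ := unif D u₂ N L hL B hB1 (by rw [hB]; linarith) h₂
  have step1 := leibniz_norm D hD u₁ u₂ n
  have step2 : ∑ k ∈ range (n+1), (n.choose k : ℝ) * ‖(⇑D)^[n - k] u₁‖ * ‖(⇑D)^[k] u₂‖
      ≤ ∑ k ∈ range (n+1),
        ((n.choose k : ℝ) * ((k-3).factorial : ℝ) * (((n-k)-3).factorial : ℝ))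
          * (B^2 * L ^ (n-2)) := by
    apply Finset.sum_le_sum
    intro k hk
    rw [Finset.mem_range] at hk
    have hkn : k ≤ n := by omega
    have e1 := hu₁ (n - k) (by omega)
    have e2 := hu₂ k (by omega)
    have hCpos : (0:ℝ) ≤ (n.choose k : ℝ) := by positivity
    calc (n.choose k : ℝ) * ‖(⇑D)^[n - k] u₁‖ * ‖(⇑D)^[k] u₂‖
        ≤ (n.choose k : ℝ) * (B * L ^ ((n-k) - 2) * (((n-k) - 3).factorial : ℝ))
          * (B * L ^ (k - 2) * ((k - 3).factorial : ℝ)) := by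
          apply mul_le_mul _ e2 (norm_nonneg _) _
          · apply mul_le_mul_of_nonneg_left e1 hCpos
          · have : (0:ℝ) ≤ B * L ^ ((n-k) - 2) * (((n-k) - 3).factorial : ℝ) := by positivity
            positivity
      _ = ((n.choose k : ℝ) * ((k-3).factorial : ℝ) * (((n-k)-3).factorial : ℝ))
          * (B^2 * (L ^ ((n-k) - 2) * L ^ (k - 2))) := by ring
      _ = ((n.choose k : ℝ) * ((k-3).factorial : ℝ) * (((n-k)-3).factorial : ℝ))
          * (B^2 * L ^ (((n-k) - 2) + (k - 2))) := by rw [pow_add]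
      _ ≤ ((n.choose k : ℝ) * ((k-3).factorial : ℝ) * (((n-k)-3).factorial : ℝ))
          * (B^2 * L ^ (n - 2)) := by
          apply mul_le_mul_of_nonneg_left _ (by positivity)
          apply mul_le_mul_of_nonneg_left _ (by positivity)
          exact pow_le_pow_right₀ hL (by omega)
  have step3 : ∑ k ∈ range (n+1),
      ((n.choose k : ℝ) * ((k-3).factorial : ℝ) * (((n-k)-3).factorial : ℝ))
        * (B^2 * L ^ (n-2))
      ≤ 54 * ((n-3).factorial : ℝ) * (B^2 * L ^ (n-2)) := by
    rw [← Finset.sum_mul]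
    apply mul_le_mul_of_nonneg_right (comb n hn3) (by positivity)
  calc ‖(⇑D)^[n] (u₁ * u₂)‖
      ≤ ∑ k ∈ range (n+1), (n.choose k : ℝ) * ‖(⇑D)^[n - k] u₁‖ * ‖(⇑D)^[k] u₂‖ := step1
    _ ≤ ∑ k ∈ range (n+1),
        ((n.choose k : ℝ) * ((k-3).factorial : ℝ) * (((n-k)-3).factorial : ℝ))
          * (B^2 * L ^ (n-2)) := step2
    _ ≤ 54 * ((n-3).factorial : ℝ) * (B^2 * L ^ (n-2)) := step3
    _ = 54 * B ^ 2 * L ^ (n-2) * ((n-3).factorial : ℝ) := by ring
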